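/- Stability under vanishing cost perturbation: Let μ₁ ⪯_c ⋯ ⪯_c μ_n be probability measures on compact subsets of ℝ^d in convex order, let c, p be continuous cost functions on X₁×⋯×X_n, and set c_ε = c + εp. For ε ≥ 0 let Π^M_ε(μ₁,…,μ_n) denote the set of minimizers of ∫ c_ε dπ over π ∈ Π_M(μ₁,…,μ_n). Let ε_k → 0 with ε_k > 0, and for each k let π_k ∈ Π^M_{ε_k}(μ₁,…,μ_n). Then any weak limit π₀ of (a subsequence of) (π_k) belongs to Π^M_0(μ₁,…,μ_n) and moreover minimizes ∫ p dπ over π ∈ Π^M_0(μ₁,…,μ_n). -/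

import Mathlib

open MeasureTheory ProbabilityTheory Filter Topology
open scoped NNReal BoundedContinuousFunction

noncomputable section

namespace MOT

/-- Euclidean space ℝ^d. -/
abbrev Euc (d : ℕ) : Type := EuclideanSpace ℝ (Fin d)

variable {d : ℕ}

/-- Convex order of measures on ℝ^d: `μ ⪯_c ν` iff `∫ φ dμ ≤ ∫ φ dν` for every
convex function `φ`. -/
def ConvexOrder (μ ν : Measure (Euc d)) : Prop :=
  ∀ φ : Euc d → ℝ, ConvexOn ℝ Set.univ φ → ∫ x, φ x ∂μ ≤ ∫ x, φ x ∂ν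

/-- `π` is a two-period martingale coupling of `μ` and `ν`: it has marginals `μ`, `ν`,
and its disintegration `κ` over the first variable has barycenter `x` at `μ`-a.e. `x`. -/
def IsMartCoupling2 (μ ν : Measure (Euc d)) (π : Measure (Euc d × Euc d)) : Prop :=
  π.map Prod.snd = ν ∧
  ∃ κ : Kernel (Euc d) (Euc d), IsMarkovKernel κ ∧ π = μ ⊗ₘ κ ∧
    ∀ᵐ x ∂μ, ∫ y, y ∂(κ x) = x

/-- `π` is a three-period martingale coupling of `μ₁, μ₂, μ₃`. -/
def IsMartCoupling3 (μ₁ μ₂ μ₃ : Measure (Euc d)) (π : Measure (Euc d × Euc d × Euc d)) : Prop :=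
  π.map (fun q => q.1) = μ₁ ∧
  π.map (fun q => q.2.1) = μ₂ ∧
  π.map (fun q => q.2.2) = μ₃ ∧
  ∃ (κ₁ : Kernel (Euc d) (Euc d)) (κ₂ : Kernel (Euc d × Euc d) (Euc d)),
    IsMarkovKernel κ₁ ∧ IsMarkovKernel κ₂ ∧
    π = ((μ₁ ⊗ₘ κ₁) ⊗ₘ κ₂).map (fun q => (q.1.1, q.1.2, q.2)) ∧
    (∀ᵐ x ∂μ₁, ∫ y, y ∂(κ₁ x) = x) ∧
    (∀ᵐ q ∂(μ₁ ⊗ₘ κ₁), ∫ z, z ∂(κ₂ q) = q.2)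

/-- Membership in `Π̄(F, σX, σZ)`: couplings of `σX` and `σZ` whose disintegration `κ`
over the first variable satisfies `∫ z κ(x, dz) = F x` for `σX`-a.e. `x`. -/
def MemPiBar (F : Euc d → Euc d) (σX σZ : Measure (Euc d))
    (π : Measure (Euc d × Euc d)) : Prop :=
  π.map Prod.snd = σZ ∧
  ∃ κ : Kernel (Euc d) (Euc d), IsMarkovKernel κ ∧ π = σX ⊗ₘ κ ∧
    ∀ᵐ x ∂σX, ∫ z, z ∂(κ x) = F x


/-- `π` is an `(n+1)`-period martingale coupling of the marginals `μ i`: each marginal is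
`μ i`, and for each consecutive pair of indices the conditional expectation of the next
coordinate given all previous ones equals the current coordinate (expressed via bounded
continuous test functions depending only on the first coordinates). -/
def IsMartCouplingN {d n : ℕ} (μ : Fin (n + 1) → Measure (Euc d))
    (π : Measure (Fin (n + 1) → Euc d)) : Prop :=
  (∀ i, π.map (fun x => x i) = μ i) ∧
  ∀ i : Fin n, ∀ g : (Fin (n + 1) → Euc d) → ℝ, Continuous g →
    (∃ C, ∀ x, |g x| ≤ C) →
    (∀ x y : Fin (n + 1) → Euc d, (∀ k, k ≤ i.castSucc → x k = y k) → g x = g y) →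
    ∫ x, g x • (x i.succ - x i.castSucc) ∂π = 0

/-- Two finite Borel measures agreeing on integrals of all real bounded continuous functions
are equal. -/
lemma ext_of_forall_integral_bcf_eq {Ω : Type*} [MeasurableSpace Ω] [TopologicalSpace Ω]
    [HasOuterApproxClosed Ω] [BorelSpace Ω] {μ ν : Measure Ω}
    [IsFiniteMeasure μ] [IsFiniteMeasure ν]
    (h : ∀ f : Ω →ᵇ ℝ, ∫ x, f x ∂μ = ∫ x, f x ∂ν) : μ = ν := by
  apply ext_of_forall_lintegral_eq_of_IsFiniteMeasure
  intro f
  have h1 := BoundedContinuousFunction.lintegral_lt_top_of_nnreal μ f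
  have h2 := BoundedContinuousFunction.lintegral_lt_top_of_nnreal ν f
  have hiso : Isometry ((↑) : ℝ≥0 → ℝ) := fun _ _ ↦ rfl
  have key := h (f.comp _ hiso.lipschitz)
  rw [← ENNReal.toReal_eq_toReal_iff' h1.ne h2.ne,
    BoundedContinuousFunction.toReal_lintegral_coe_eq_integral,
    BoundedContinuousFunction.toReal_lintegral_coe_eq_integral]
  simpa using key

/-- **Stability under a vanishing cost perturbation.** If `π k` minimizes `∫ (c + ε k • p)` over
the martingale couplings, `ε k > 0`, `ε k → 0`, and a subsequence of `(π k)` converges weakly to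
`π₀`, then `π₀` minimizes `∫ c` over the martingale couplings, and among all minimizers of
`∫ c` it minimizes `∫ p`. -/
theorem stability_vanishing_perturbation {d n : ℕ}
    (μ : Fin (n + 1) → Measure (Euc d)) [∀ i, IsProbabilityMeasure (μ i)]
    (X : Fin (n + 1) → Set (Euc d)) (hX : ∀ i, IsCompact (X i))
    (hμX : ∀ i, μ i (X i)ᶜ = 0)
    (hord : ∀ i : Fin n, ConvexOrder (μ i.castSucc) (μ i.succ))
    (c p : (Fin (n + 1) → Euc d) → ℝ) (hc : Continuous c) (hp : Continuous p)
    (ε : ℕ → ℝ) (hεpos : ∀ k, 0 < ε k) (hεlim : Tendsto ε atTop (𝓝 0))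
    (πk : ℕ → Measure (Fin (n + 1) → Euc d))
    (hπk : ∀ k, IsMartCouplingN μ (πk k))
    (hπkopt : ∀ k, ∀ π', IsMartCouplingN μ π' →
      ∫ x, (c x + ε k * p x) ∂(πk k) ≤ ∫ x, (c x + ε k * p x) ∂π')
    (φ : ℕ → ℕ) (hφ : StrictMono φ)
    (π₀ : Measure (Fin (n + 1) → Euc d))
    (hlim : ∀ f : BoundedContinuousFunction (Fin (n + 1) → Euc d) ℝ,
      Tendsto (fun k => ∫ x, f x ∂(πk (φ k))) atTop (𝓝 (∫ x, f x ∂π₀))) :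
    IsMartCouplingN μ π₀ ∧
    (∀ π', IsMartCouplingN μ π' → ∫ x, c x ∂π₀ ≤ ∫ x, c x ∂π') ∧
    (∀ π', IsMartCouplingN μ π' →
      (∀ π'', IsMartCouplingN μ π'' → ∫ x, c x ∂π' ≤ ∫ x, c x ∂π'') →
      ∫ x, p x ∂π₀ ≤ ∫ x, p x ∂π') := by
  classical
  -- a common radius bound for the supports
  have hbd : ∀ i, ∃ r : ℝ, X i ⊆ Metric.closedBall 0 r := fun i =>
    ((hX i).isBounded).subset_closedBall 0
  choose rad hrad using hbd
  set R : ℝ := 1 + ∑ i, |rad i| with hR_def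
  have hR : 0 < R := by
    have : (0:ℝ) ≤ ∑ i, |rad i| := Finset.sum_nonneg fun i _ => abs_nonneg _
    linarith
  have hXR : ∀ i, ∀ v ∈ X i, ‖v‖ ≤ R := by
    intro i v hv
    have h1 : ‖v‖ ≤ rad i := by
      simpa [Metric.mem_closedBall] using hrad i hv
    have h2 : rad i ≤ ∑ j, |rad j| :=
      le_trans (le_abs_self _) (Finset.single_le_sum (fun j _ => abs_nonneg (rad j))
        (Finset.mem_univ i))
    linarith
  -- any measure with the right marginals is a probability measure supported in the box
  have hprob : ∀ π : Measure (Fin (n + 1) → Euc d),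
      (∀ i, π.map (fun x => x i) = μ i) → IsProbabilityMeasure π := by
    intro π hm
    constructor
    have h0 : (π.map (fun x => x (0 : Fin (n + 1)))) Set.univ = 1 := by
      rw [hm 0]; exact measure_univ
    rwa [Measure.map_apply (measurable_pi_apply 0) MeasurableSet.univ, Set.preimage_univ] at h0
  have hsupp : ∀ π : Measure (Fin (n + 1) → Euc d),
      (∀ i, π.map (fun x => x i) = μ i) → ∀ᵐ x ∂π, ∀ i, ‖x i‖ ≤ R := by
    intro π hm
    rw [ae_all_iff]
    intro i
    have hset : {x : Fin (n + 1) → Euc d | ¬ ‖x i‖ ≤ R} =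
        (fun x : Fin (n + 1) → Euc d => x i) ⁻¹' {v : Euc d | R < ‖v‖} := by
      ext x; simp [not_le]
    have hms : MeasurableSet {v : Euc d | R < ‖v‖} :=
      (isOpen_lt continuous_const continuous_norm).measurableSet
    rw [ae_iff]
    show π {x | ¬ ‖x i‖ ≤ R} = 0
    rw [hset, ← Measure.map_apply (measurable_pi_apply i) hms, hm i]
    refine measure_mono_null ?_ (hμX i)
    intro v hv
    simp only [Set.mem_setOf_eq] at hv
    intro hvX
    exact absurd (hXR i v hvX) (not_le.mpr hv)
  -- the truncation map
  set T : Euc d → Euc d := fun v => (R / max R ‖v‖) • v with hT_def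
  have hTden : ∀ v : Euc d, (0:ℝ) < max R ‖v‖ := fun v => lt_of_lt_of_le hR (le_max_left _ _)
  have hTcont : Continuous T := by
    refine Continuous.smul (f := fun v : Euc d => R / max R ‖v‖) (g := fun v : Euc d => v) ?_ continuous_id
    exact continuous_const.div (continuous_const.max continuous_norm)
      (fun v => (hTden v).ne')
  have hTbound : ∀ v : Euc d, ‖T v‖ ≤ R := by
    intro v
    have hnn : (0:ℝ) ≤ R / max R ‖v‖ := div_nonneg hR.le (hTden v).le
    rw [hT_def]
    simp only [norm_smul, Real.norm_eq_abs, abs_of_nonneg hnn]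
    calc R / max R ‖v‖ * ‖v‖ ≤ R / max R ‖v‖ * max R ‖v‖ :=
          mul_le_mul_of_nonneg_left (le_max_right _ _) hnn
      _ = R := div_mul_cancel₀ R (hTden v).ne'
  have hTid : ∀ v : Euc d, ‖v‖ ≤ R → T v = v := by
    intro v hv
    rw [hT_def]
    simp only
    rw [max_eq_left hv, div_self hR.ne', one_smul]
  -- the retraction onto the box
  set r : (Fin (n + 1) → Euc d) → (Fin (n + 1) → Euc d) := fun x i => T (x i) with hr_def
  have hrcont : Continuous r := continuous_pi fun i => hTcont.comp (continuous_apply i)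
  have hrid : ∀ x : Fin (n + 1) → Euc d, (∀ i, ‖x i‖ ≤ R) → r x = x := by
    intro x hx; funext i; exact hTid _ (hx i)
  have hae_r : ∀ π : Measure (Fin (n + 1) → Euc d),
      (∀ i, π.map (fun x => x i) = μ i) → ∀ᵐ x ∂π, r x = x := by
    intro π hm
    exact (hsupp π hm).mono fun x hx => hrid x hx
  -- composed with the retraction, continuous functions become bounded
  set Kc : Set (Fin (n + 1) → Euc d) := Set.pi Set.univ fun _ => Metric.closedBall 0 R
    with hKc_def
  have hKcomp : IsCompact Kc := isCompact_univ_pi fun _ => isCompact_closedBall 0 R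
  have hrmem : ∀ x, r x ∈ Kc := by
    intro x
    intro i _
    simpa [Metric.mem_closedBall, dist_eq_norm] using hTbound (x i)
  have hbdd : ∀ f : (Fin (n + 1) → Euc d) → ℝ, Continuous f →
      ∃ C, ∀ x, ‖f (r x)‖ ≤ C := by
    intro f hf
    obtain ⟨C, hC⟩ := hKcomp.exists_bound_of_continuousOn hf.continuousOn
    exact ⟨C, fun x => hC _ (hrmem x)⟩
  obtain ⟨Cc, hCc⟩ := hbdd c hc
  obtain ⟨Cp, hCp⟩ := hbdd p hp
  set cb : (Fin (n + 1) → Euc d) →ᵇ ℝ :=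
    BoundedContinuousFunction.ofNormedAddCommGroup (fun x => c (r x)) (hc.comp hrcont) Cc hCc
    with hcb_def
  set pb : (Fin (n + 1) → Euc d) →ᵇ ℝ :=
    BoundedContinuousFunction.ofNormedAddCommGroup (fun x => p (r x)) (hp.comp hrcont) Cp hCp
    with hpb_def
  have hcb_apply : ∀ x, cb x = c (r x) := fun x => rfl
  have hpb_apply : ∀ x, pb x = p (r x) := fun x => rfl
  -- integral identities
  have hc_eq : ∀ π : Measure (Fin (n + 1) → Euc d),
      (∀ i, π.map (fun x => x i) = μ i) → ∫ x, c x ∂π = ∫ x, cb x ∂π := by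
    intro π hm
    refine integral_congr_ae ((hae_r π hm).mono fun x hx => ?_)
    rw [hcb_apply, hx]
  have hp_eq : ∀ π : Measure (Fin (n + 1) → Euc d),
      (∀ i, π.map (fun x => x i) = μ i) → ∫ x, p x ∂π = ∫ x, pb x ∂π := by
    intro π hm
    refine integral_congr_ae ((hae_r π hm).mono fun x hx => ?_)
    rw [hpb_apply, hx]
  have hsplit : ∀ π : Measure (Fin (n + 1) → Euc d),
      (∀ i, π.map (fun x => x i) = μ i) → ∀ e : ℝ,
      ∫ x, (c x + e * p x) ∂π = ∫ x, cb x ∂π + e * ∫ x, pb x ∂π := by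
    intro π hm e
    haveI := hprob π hm
    have h1 : ∫ x, (c x + e * p x) ∂π = ∫ x, (cb x + e * pb x) ∂π := by
      refine integral_congr_ae ((hae_r π hm).mono fun x hx => ?_)
      show c x + e * p x = cb x + e * pb x
      rw [hcb_apply, hpb_apply, hx]
    rw [h1, integral_add (cb.integrable π) ((pb.integrable π).const_mul e),
      integral_const_mul]
  -- π₀ is a probability measure
  haveI hπ₀prob : IsProbabilityMeasure π₀ := by
    have h1 := hlim 1
    have h2 : ∀ k, ∫ x, (1 : (Fin (n + 1) → Euc d) →ᵇ ℝ) x ∂(πk (φ k)) = 1 := by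
      intro k
      haveI := hprob _ (hπk (φ k)).1
      simp
    simp only [h2] at h1
    have h3 : (1:ℝ) = ∫ x, (1 : (Fin (n + 1) → Euc d) →ᵇ ℝ) x ∂π₀ :=
      tendsto_nhds_unique tendsto_const_nhds h1
    have h4 : ∫ x, (1 : (Fin (n + 1) → Euc d) →ᵇ ℝ) x ∂π₀ = (π₀ Set.univ).toReal • (1:ℝ) := by
      simpa [Measure.real] using integral_const (μ := π₀) (1:ℝ)
    rw [h4, smul_eq_mul, mul_one] at h3
    exact ⟨(ENNReal.toReal_eq_one_iff _).mp h3.symm⟩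
  -- marginals of π₀
  have hmarg0 : ∀ i, π₀.map (fun x => x i) = μ i := by
    intro i
    have hprojm : Measurable fun x : Fin (n + 1) → Euc d => x i := measurable_pi_apply i
    haveI : IsProbabilityMeasure (π₀.map fun x => x i) :=
      Measure.isProbabilityMeasure_map hprojm.aemeasurable
    apply ext_of_forall_integral_bcf_eq
    intro f
    set F : (Fin (n + 1) → Euc d) →ᵇ ℝ := f.compContinuous ⟨fun x => x i, continuous_apply i⟩
      with hF_def
    have hF_apply : ∀ x, F x = f (x i) := fun x => rfl
    have hconst : ∀ k, ∫ x, F x ∂(πk (φ k)) = ∫ v, f v ∂(μ i) := by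
      intro k
      rw [← (hπk (φ k)).1 i,
        integral_map hprojm.aemeasurable f.continuous.measurable.aestronglyMeasurable]
      rfl
    have h1 := hlim F
    simp only [hconst] at h1
    have h2 : ∫ v, f v ∂(μ i) = ∫ x, F x ∂π₀ :=
      tendsto_nhds_unique tendsto_const_nhds h1
    rw [integral_map hprojm.aemeasurable f.continuous.measurable.aestronglyMeasurable, h2]
    rfl
  -- the martingale property of π₀
  have hmart0 : IsMartCouplingN μ π₀ := by
    refine ⟨hmarg0, ?_⟩
    intro i g hg hgb hgdep
    obtain ⟨Cg, hCg⟩ := hgb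
    have hCg0 : (0:ℝ) ≤ Cg := le_trans (abs_nonneg _) (hCg 0)
    set f : (Fin (n + 1) → Euc d) → Euc d := fun x => g x • (x i.succ - x i.castSucc)
      with hf_def
    set h : (Fin (n + 1) → Euc d) → Euc d :=
      fun x => g x • (T (x i.succ) - T (x i.castSucc)) with hh_def
    have hhcont : Continuous h :=
      hg.smul ((hTcont.comp (continuous_apply (i.succ : Fin (n + 1)))).sub
        (hTcont.comp (continuous_apply (i.castSucc : Fin (n + 1)))))
    have hhbound : ∀ x, ‖h x‖ ≤ Cg * (R + R) := by
      intro x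
      rw [hh_def]
      simp only [norm_smul, Real.norm_eq_abs]
      refine mul_le_mul (hCg x) ?_ (norm_nonneg _) hCg0
      calc ‖T (x i.succ) - T (x i.castSucc)‖
          ≤ ‖T (x i.succ)‖ + ‖T (x i.castSucc)‖ := norm_sub_le _ _
        _ ≤ R + R := add_le_add (hTbound _) (hTbound _)
    set hB : (Fin (n + 1) → Euc d) →ᵇ Euc d :=
      BoundedContinuousFunction.ofNormedAddCommGroup h hhcont _ hhbound with hhB_def
    have hB_apply : ∀ x, hB x = h x := fun x => rfl
    have hae_fh : ∀ π : Measure (Fin (n + 1) → Euc d),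
        (∀ i, π.map (fun x => x i) = μ i) → h =ᵐ[π] f := by
      intro π hm
      refine (hsupp π hm).mono fun x hx => ?_
      rw [hh_def, hf_def]
      simp only
      rw [hTid _ (hx i.succ), hTid _ (hx i.castSucc)]
    have hint : ∀ π : Measure (Fin (n + 1) → Euc d),
        (∀ i, π.map (fun x => x i) = μ i) → Integrable f π := by
      intro π hm
      haveI := hprob π hm
      exact (hB.integrable π).congr (hae_fh π hm)
    -- reduce to inner products
    refine integral_eq_zero_of_forall_integral_inner_eq_zero ℝ f (hint π₀ hmarg0) ?_
    intro w
    -- the bounded continuous scalar test function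
    have hGcont : Continuous fun x => (inner ℝ w (h x) : ℝ) := continuous_const.inner hhcont
    have hGbound : ∀ x, ‖(inner ℝ w (h x) : ℝ)‖ ≤ ‖w‖ * (Cg * (R + R)) := by
      intro x
      calc ‖(inner ℝ w (h x) : ℝ)‖ ≤ ‖w‖ * ‖h x‖ := norm_inner_le_norm _ _
        _ ≤ ‖w‖ * (Cg * (R + R)) :=
            mul_le_mul_of_nonneg_left (hhbound x) (norm_nonneg _)
    set G : (Fin (n + 1) → Euc d) →ᵇ ℝ :=
      BoundedContinuousFunction.ofNormedAddCommGroup _ hGcont _ hGbound with hG_def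
    have hG_apply : ∀ x, G x = (inner ℝ w (h x) : ℝ) := fun x => rfl
    have hGzero : ∀ k, ∫ x, G x ∂(πk (φ k)) = 0 := by
      intro k
      have hfk := (hπk (φ k)).2 i g hg ⟨Cg, hCg⟩ hgdep
      have h1 : ∫ x, G x ∂(πk (φ k)) = ∫ x, (inner ℝ w (f x) : ℝ) ∂(πk (φ k)) := by
        refine integral_congr_ae ((hae_fh _ (hπk (φ k)).1).mono fun x hx => ?_)
        rw [hG_apply, hx]
      rw [h1, integral_inner (hint _ (hπk (φ k)).1) w, hfk, inner_zero_right]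
    have h1 := hlim G
    simp only [hGzero] at h1
    have h2 : ∫ x, G x ∂π₀ = 0 := tendsto_nhds_unique h1 tendsto_const_nhds
    have h3 : ∫ x, G x ∂π₀ = ∫ x, (inner ℝ w (f x) : ℝ) ∂π₀ := by
      refine integral_congr_ae ((hae_fh π₀ hmarg0).mono fun x hx => ?_)
      rw [hG_apply, hx]
    rw [← h3, h2]
  refine ⟨hmart0, ?_, ?_⟩
  · -- π₀ minimizes ∫ c
    intro π' hπ'
    have hεφ : Tendsto (fun k => ε (φ k)) atTop (𝓝 0) := hεlim.comp hφ.tendsto_atTop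
    have hineq : ∀ k, ∫ x, cb x ∂(πk (φ k)) + ε (φ k) * ∫ x, pb x ∂(πk (φ k)) ≤
        ∫ x, cb x ∂π' + ε (φ k) * ∫ x, pb x ∂π' := by
      intro k
      have := hπkopt (φ k) π' hπ'
      rwa [hsplit _ (hπk (φ k)).1, hsplit _ hπ'.1] at this
    have hL : Tendsto (fun k => ∫ x, cb x ∂(πk (φ k)) + ε (φ k) * ∫ x, pb x ∂(πk (φ k)))
        atTop (𝓝 (∫ x, cb x ∂π₀ + 0 * ∫ x, pb x ∂π₀)) :=
      (hlim cb).add (hεφ.mul (hlim pb))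
    have hRt : Tendsto (fun k => ∫ x, cb x ∂π' + ε (φ k) * ∫ x, pb x ∂π')
        atTop (𝓝 (∫ x, cb x ∂π' + 0 * ∫ x, pb x ∂π')) :=
      tendsto_const_nhds.add (hεφ.mul tendsto_const_nhds)
    have hle := le_of_tendsto_of_tendsto' hL hRt hineq
    rw [zero_mul, add_zero, zero_mul, add_zero] at hle
    rw [hc_eq π₀ hmarg0, hc_eq π' hπ'.1]
    exact hle
  · -- among minimizers of ∫ c, π₀ minimizes ∫ p
    intro π' hπ' hopt'
    have hεφ : ∀ k, 0 < ε (φ k) := fun k => hεpos (φ k)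
    have hkey : ∀ k, ∫ x, pb x ∂(πk (φ k)) ≤ ∫ x, pb x ∂π' := by
      intro k
      have h1 := hπkopt (φ k) π' hπ'
      rw [hsplit _ (hπk (φ k)).1, hsplit _ hπ'.1] at h1
      have h2 := hopt' (πk (φ k)) (hπk (φ k))
      rw [hc_eq π' hπ'.1, hc_eq _ (hπk (φ k)).1] at h2
      have h3 : ε (φ k) * ∫ x, pb x ∂(πk (φ k)) ≤ ε (φ k) * ∫ x, pb x ∂π' := by linarith
      exact le_of_mul_le_mul_left h3 (hεφ k)
    have hle := le_of_tendsto' (hlim pb) hkey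
    rw [hp_eq π₀ hmarg0, hp_eq π' hπ'.1]
    exact hle


end MOT
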